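/- Fix n > 3. For each i : Fin n let T_i be the permutation of states (Fin n → ZMod 2) that replaces y_i by y_i + 1 when y_{i−1} = y_{i+1} = 0 and leaves the state unchanged otherwise (the Wolfram rule 201 local function at i). Let G₂₀₁ be the subgroup of the permutation group of (Fin n → ZMod 2) generated by {T_i ∣ i : Fin n}. Then every orbit of G₂₀₁ on (Fin n → ZMod 2) contains exactly one state belonging to N_D; consequently the number of orbits equals the cardinality of N_D. -/

import Mathlib

namespace Stmt12Aux

variable {n : ℕ} [NeZero n]

/-- `i` is an isolated 1 in `y`. -/
abbrev iso (y : Fin n → ZMod 2) (i : Fin n) : Prop :=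
  y (i - 1) = 0 ∧ y i = 1 ∧ y (i + 1) = 0

/-- Normal form: kill all isolated 1s. -/
def phi (y : Fin n → ZMod 2) : Fin n → ZMod 2 :=
  fun i => if iso y i then 0 else y i

lemma val_one (hn : 3 < n) : ((1 : Fin n)).val = 1 := by
  rw [Fin.val_one']; exact Nat.mod_eq_of_lt (by omega)

lemma add_one_ne (hn : 3 < n) (i : Fin n) : i + 1 ≠ i := by
  simp [Fin.ext_iff]; omega

lemma sub_one_ne (hn : 3 < n) (i : Fin n) : i - 1 ≠ i := by
  intro h
  have : i - 1 + 1 = i + 1 := by rw [h]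
  rw [sub_add_cancel] at this
  exact add_one_ne hn i this.symm

lemma sub_one_ne_add_one (hn : 3 < n) (i : Fin n) : i - 1 ≠ i + 1 := by
  intro h
  have h1 : i - 1 + 1 = i + 1 + 1 := by rw [h]
  rw [sub_add_cancel, add_assoc] at h1
  have h2 : (0 : Fin n) = 1 + 1 := add_left_cancel (a := i) (by rw [add_zero]; exact h1)
  have h3 : ((0 : Fin n)).val = (1 + 1 : Fin n).val := by rw [h2]
  rw [Fin.val_add, val_one hn, Fin.val_zero] at h3
  rw [Nat.mod_eq_of_lt (by omega)] at h3
  omega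

lemma zmod2_cases (x : ZMod 2) : x = 0 ∨ x = 1 := by revert x; decide

lemma phi_apply (y : Fin n → ZMod 2) (j : Fin n) :
    phi y j = if iso y j then 0 else y j := rfl

lemma phi_update (hn : 3 < n) (y : Fin n → ZMod 2) (i : Fin n)
    (h1 : y (i - 1) = 0) (h2 : y (i + 1) = 0) :
    phi (Function.update y i (y i + 1)) = phi y := by
  set z := Function.update y i (y i + 1) with hz
  have hzi : z i = y i + 1 := Function.update_self i _ y
  have hzne : ∀ k, k ≠ i → z k = y k := fun k hk => Function.update_of_ne hk _ y
  funext j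
  rw [phi_apply, phi_apply]
  by_cases hji : j = i
  · subst hji
    have e1 : z (j - 1) = y (j - 1) := hzne _ (sub_one_ne hn j)
    have e2 : z (j + 1) = y (j + 1) := hzne _ (add_one_ne hn j)
    rcases zmod2_cases (y j) with h | h
    · have hz1 : z j = 1 := by rw [hzi, h]; decide
      have hziso : iso z j := ⟨e1.trans h1, hz1, e2.trans h2⟩
      have hyiso : ¬ iso y j := fun hc =>
        (by decide : (0 : ZMod 2) ≠ 1) (h.symm.trans hc.2.1)
      rw [if_pos hziso, if_neg hyiso, h]
    · have hz0 : z j = 0 := by rw [hzi, h]; decide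
      have hzniso : ¬ iso z j := fun hc =>
        (by decide : (0 : ZMod 2) ≠ 1) (hz0.symm.trans hc.2.1)
      have hyiso : iso y j := ⟨h1, h, h2⟩
      rw [if_pos hyiso, if_neg hzniso, hz0]
  · have ej : z j = y j := hzne _ hji
    by_cases hj1 : j = i + 1
    · have hyj0 : y j = 0 := by rw [hj1]; exact h2
      have c1 : ¬ iso z j := fun hc =>
        (by decide : (0 : ZMod 2) ≠ 1) (hyj0.symm.trans (ej.symm.trans hc.2.1))
      have c2 : ¬ iso y j := fun hc =>
        (by decide : (0 : ZMod 2) ≠ 1) (hyj0.symm.trans hc.2.1)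
      rw [if_neg c1, if_neg c2, ej]
    · by_cases hj2 : j = i - 1
      · have hyj0 : y j = 0 := by rw [hj2]; exact h1
        have c1 : ¬ iso z j := fun hc =>
          (by decide : (0 : ZMod 2) ≠ 1) (hyj0.symm.trans (ej.symm.trans hc.2.1))
        have c2 : ¬ iso y j := fun hc =>
          (by decide : (0 : ZMod 2) ≠ 1) (hyj0.symm.trans hc.2.1)
        rw [if_neg c1, if_neg c2, ej]
      · have e1 : z (j - 1) = y (j - 1) :=
          hzne _ (fun hh => hj1 (by rw [← hh, sub_add_cancel]))
        have e2 : z (j + 1) = y (j + 1) :=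
          hzne _ (fun hh => hj2 (by rw [← hh, add_sub_cancel_right]))
        have hiff : iso z j ↔ iso y j := by
          constructor
          · rintro ⟨a, b, c⟩
            exact ⟨e1.symm.trans a, ej.symm.trans b, e2.symm.trans c⟩
          · rintro ⟨a, b, c⟩
            exact ⟨e1.trans a, ej.trans b, e2.trans c⟩
        by_cases hy : iso y j
        · rw [if_pos (hiff.mpr hy), if_pos hy]
        · rw [if_neg (fun hc => hy (hiff.mp hc)), if_neg hy, ej]

lemma iso_update (hn : 3 < n) (y : Fin n → ZMod 2) (i : Fin n)
    (hi : iso y i) (j : Fin n) :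
    iso (Function.update y i (y i + 1)) j ↔ iso y j ∧ j ≠ i := by
  obtain ⟨h1, h3, h2⟩ := hi
  set z := Function.update y i (y i + 1) with hz
  have hzi : z i = 0 := (Function.update_self i (y i + 1) y).trans (by rw [h3]; decide)
  have hzne : ∀ k, k ≠ i → z k = y k := fun k hk => Function.update_of_ne hk _ y
  by_cases hji : j = i
  · subst hji
    simp only [ne_eq, not_true_eq_false, and_false, iff_false]
    exact fun hc => (by decide : (0 : ZMod 2) ≠ 1) (hzi.symm.trans hc.2.1)
  · have ej : z j = y j := hzne _ hji
    by_cases hj1 : j = i + 1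
    · have hyj0 : y j = 0 := by rw [hj1]; exact h2
      constructor
      · exact fun hc =>
          absurd (hyj0.symm.trans (ej.symm.trans hc.2.1)) (by decide)
      · exact fun hc =>
          absurd (hyj0.symm.trans hc.1.2.1) (by decide)
    · by_cases hj2 : j = i - 1
      · have hyj0 : y j = 0 := by rw [hj2]; exact h1
        constructor
        · exact fun hc =>
            absurd (hyj0.symm.trans (ej.symm.trans hc.2.1)) (by decide)
        · exact fun hc =>
            absurd (hyj0.symm.trans hc.1.2.1) (by decide)
      · have e1 : z (j - 1) = y (j - 1) :=
          hzne _ (fun hh => hj1 (by rw [← hh, sub_add_cancel]))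
        have e2 : z (j + 1) = y (j + 1) :=
          hzne _ (fun hh => hj2 (by rw [← hh, add_sub_cancel_right]))
        constructor
        · rintro ⟨a, b, c⟩
          exact ⟨⟨e1.symm.trans a, ej.symm.trans b, e2.symm.trans c⟩, hji⟩
        · rintro ⟨⟨a, b, c⟩, _⟩
          exact ⟨e1.trans a, ej.trans b, e2.trans c⟩

lemma phi_fixed {y : Fin n → ZMod 2} (h : ∀ i, ¬ iso y i) : phi y = y :=
  funext fun j => if_neg (h j)

lemma phi_nd (hn : 3 < n) (y : Fin n → ZMod 2) (j : Fin n) : ¬ iso (phi y) j := by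
  rintro ⟨hA, hB, hC⟩
  have hyj : y j = 1 ∧ ¬ iso y j := by
    rw [phi_apply] at hB
    by_cases h : iso y j
    · rw [if_pos h] at hB; exact absurd hB (by decide)
    · rw [if_neg h] at hB; exact ⟨hB, h⟩
  have hside : y (j - 1) = 1 ∨ y (j + 1) = 1 := by
    by_contra hc
    push_neg at hc
    have c1 : y (j - 1) = 0 := by
      rcases zmod2_cases (y (j - 1)) with h | h
      · exact h
      · exact absurd h hc.1
    have c2 : y (j + 1) = 0 := by
      rcases zmod2_cases (y (j + 1)) with h | h
      · exact h
      · exact absurd h hc.2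
    exact hyj.2 ⟨c1, hyj.1, c2⟩
  rcases hside with h | h
  · have hni : ¬ iso y (j - 1) := by
      rintro ⟨_, _, hc⟩
      rw [sub_add_cancel, hyj.1] at hc
      exact (by decide : (1 : ZMod 2) ≠ 0) hc
    have : phi y (j - 1) = 1 := by rw [phi_apply, if_neg hni, h]
    rw [hA] at this
    exact (by decide : (0 : ZMod 2) ≠ 1) this
  · have hni : ¬ iso y (j + 1) := by
      rintro ⟨hc, _, _⟩
      rw [add_sub_cancel_right, hyj.1] at hc
      exact (by decide : (1 : ZMod 2) ≠ 0) hc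
    have : phi y (j + 1) = 1 := by rw [phi_apply, if_neg hni, h]
    rw [hC] at this
    exact (by decide : (0 : ZMod 2) ≠ 1) this

lemma phi_T (T : Fin n → Equiv.Perm (Fin n → ZMod 2))
    (hT : ∀ (i : Fin n) (y : Fin n → ZMod 2),
      T i y = if y (i - 1) = 0 ∧ y (i + 1) = 0
        then Function.update y i (y i + 1) else y)
    (hn : 3 < n) (i : Fin n) (y : Fin n → ZMod 2) :
    phi (T i y) = phi y := by
  rw [hT]
  by_cases h : y (i - 1) = 0 ∧ y (i + 1) = 0
  · rw [if_pos h]; exact phi_update hn y i h.1 h.2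
  · rw [if_neg h]

lemma phi_invariant (T : Fin n → Equiv.Perm (Fin n → ZMod 2))
    (hT : ∀ (i : Fin n) (y : Fin n → ZMod 2),
      T i y = if y (i - 1) = 0 ∧ y (i + 1) = 0
        then Function.update y i (y i + 1) else y)
    (hn : 3 < n) {g : Equiv.Perm (Fin n → ZMod 2)}
    (hg : g ∈ Subgroup.closure (Set.range T)) :
    ∀ y : Fin n → ZMod 2, phi (g y) = phi y := by
  induction hg using Subgroup.closure_induction with
  | mem x hx =>
      obtain ⟨i, rfl⟩ := hx
      exact fun y => phi_T T hT hn i y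
  | one => exact fun y => rfl
  | mul x x' hx hx' ihx ihx' =>
      intro y
      rw [Equiv.Perm.mul_apply, ihx, ihx']
  | inv x hx ihx =>
      intro y
      have := ihx (x⁻¹ y)
      rw [show x (x⁻¹ y) = y from x.apply_symm_apply y] at this
      exact this.symm
      
lemma mem_orbit_T (T : Fin n → Equiv.Perm (Fin n → ZMod 2)) (i : Fin n)
    (y : Fin n → ZMod 2) :
    T i y ∈ MulAction.orbit ↥(Subgroup.closure (Set.range T)) y :=
  ⟨⟨T i, Subgroup.subset_closure ⟨i, rfl⟩⟩, rfl⟩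

lemma phi_mem_orbit (T : Fin n → Equiv.Perm (Fin n → ZMod 2))
    (hT : ∀ (i : Fin n) (y : Fin n → ZMod 2),
      T i y = if y (i - 1) = 0 ∧ y (i + 1) = 0
        then Function.update y i (y i + 1) else y)
    (hn : 3 < n) (y : Fin n → ZMod 2) :
    phi y ∈ MulAction.orbit ↥(Subgroup.closure (Set.range T)) y := by
  have key : ∀ (k : ℕ) (y : Fin n → ZMod 2),
      (Finset.univ.filter (fun j => iso y j)).card ≤ k →
      phi y ∈ MulAction.orbit ↥(Subgroup.closure (Set.range T)) y := by
    intro k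
    induction k with
    | zero =>
        intro y hy
        have hempty : ∀ j, ¬ iso y j := by
          intro j hj
          have hmem : j ∈ Finset.univ.filter (fun j => iso y j) :=
            Finset.mem_filter.mpr ⟨Finset.mem_univ j, hj⟩
          have := Finset.card_pos.mpr ⟨j, hmem⟩
          omega
        rw [phi_fixed hempty]
        exact MulAction.mem_orbit_self y
    | succ k ih =>
        intro y hy
        by_cases hex : ∃ i, iso y i
        · obtain ⟨i, hi⟩ := hex
          set z := Function.update y i (y i + 1) with hzdef
          have hTz : T i y = z := by rw [hT, if_pos ⟨hi.1, hi.2.2⟩]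
          have hsub : Finset.univ.filter (fun j => iso z j)
              = (Finset.univ.filter (fun j => iso y j)).erase i := by
            ext j
            simp only [Finset.mem_filter, Finset.mem_univ, true_and, Finset.mem_erase]
            rw [iso_update hn y i hi j]
            tauto
          have hcard : (Finset.univ.filter (fun j => iso z j)).card ≤ k := by
            rw [hsub]
            have hmem : i ∈ Finset.univ.filter (fun j => iso y j) :=
              Finset.mem_filter.mpr ⟨Finset.mem_univ i, hi⟩
            have := Finset.card_erase_of_mem hmem
            omega
          have hzy : z ∈ MulAction.orbit ↥(Subgroup.closure (Set.range T)) y := by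
            rw [← hTz]; exact mem_orbit_T T i y
          have horb := ih z hcard
          have hphi : phi z = phi y := phi_update hn y i hi.1 hi.2.2
          rw [← hphi]
          rw [MulAction.orbit_eq_iff.mpr hzy] at horb
          exact horb
        · push_neg at hex
          rw [phi_fixed hex]
          exact MulAction.mem_orbit_self y
  exact key _ y le_rfl

lemma phi_orbit_eq (T : Fin n → Equiv.Perm (Fin n → ZMod 2))
    (hT : ∀ (i : Fin n) (y : Fin n → ZMod 2),
      T i y = if y (i - 1) = 0 ∧ y (i + 1) = 0
        then Function.update y i (y i + 1) else y)
    (hn : 3 < n) {y z : Fin n → ZMod 2}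
    (h : z ∈ MulAction.orbit ↥(Subgroup.closure (Set.range T)) y) :
    phi z = phi y := by
  obtain ⟨g, rfl⟩ := h
  exact phi_invariant T hT hn g.2 y

end Stmt12Aux

open Stmt12Aux in
/-- For Wolfram rule 201, every orbit of the dynamics group on the
set of states contains exactly one state in `N_D` (no isolated 1s); hence the
number of orbits equals the cardinality of `N_D`. -/
theorem stmt_12 {n : ℕ} [NeZero n] (hn : 3 < n)
    (T : Fin n → Equiv.Perm (Fin n → ZMod 2))
    (hT : ∀ (i : Fin n) (y : Fin n → ZMod 2),
      T i y = if y (i - 1) = 0 ∧ y (i + 1) = 0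
        then Function.update y i (y i + 1) else y) :
    (∀ y : Fin n → ZMod 2, ∃! z : Fin n → ZMod 2,
      z ∈ MulAction.orbit ↥(Subgroup.closure (Set.range T)) y ∧
        ∀ i : Fin n, ¬(z (i - 1) = 0 ∧ z i = 1 ∧ z (i + 1) = 0)) ∧
    Nat.card (Quotient (MulAction.orbitRel
        ↥(Subgroup.closure (Set.range T)) (Fin n → ZMod 2)))
      = Nat.card {y : Fin n → ZMod 2 |
          ∀ i : Fin n, ¬(y (i - 1) = 0 ∧ y i = 1 ∧ y (i + 1) = 0)} := by
  constructor
  · intro y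
    refine ⟨phi y, ⟨phi_mem_orbit T hT hn y, fun i => phi_nd hn y i⟩, ?_⟩
    rintro z ⟨hz, hnd⟩
    have h1 : phi z = phi y := phi_orbit_eq T hT hn hz
    have h2 : phi z = z := phi_fixed hnd
    rw [← h2, h1]
  · refine Nat.card_congr ?_
    refine
      { toFun := Quotient.lift
          (fun y => (⟨phi y, fun i => phi_nd hn y i⟩ :
            {y : Fin n → ZMod 2 | ∀ i : Fin n,
              ¬(y (i - 1) = 0 ∧ y i = 1 ∧ y (i + 1) = 0)})) ?_
        invFun := fun z => Quotient.mk _ (z : Fin n → ZMod 2)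
        left_inv := ?_
        right_inv := ?_ }
    · intro a b hab
      have hmem : a ∈ MulAction.orbit ↥(Subgroup.closure (Set.range T)) b := hab
      exact Subtype.ext (phi_orbit_eq T hT hn hmem)
    · refine Quotient.ind (fun y => ?_)
      exact Quotient.sound (phi_mem_orbit T hT hn y)
    · rintro ⟨z, hz⟩
      exact Subtype.ext (phi_fixed hz)
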